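/- For integers ℓ ≥ 2 and q ≥ 2ℓ, the antiweb W̄_ℓ^q (the complement of the web W_ℓ^q) has maximum stable set size α(W̄_ℓ^q) = ⌊q/ℓ⌋. -/

import Mathlib

/-- The web `W_ℓ^q`: vertices `{0,…,q−1}`, `i ~ j` iff `ℓ ≤ |i−j| ≤ q−ℓ`. -/
def webGraph (q ℓ : ℕ) : SimpleGraph (Fin q) :=
  SimpleGraph.fromRel (fun i j =>
    ℓ ≤ max i.val j.val - min i.val j.val ∧ max i.val j.val - min i.val j.val ≤ q - ℓ)

lemma nonadj_iff (q ℓ : ℕ) (a b : Fin q) (hab : a ≠ b) :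
    ¬ (webGraph q ℓ)ᶜ.Adj a b ↔
      (ℓ ≤ max a.val b.val - min a.val b.val ∧ max a.val b.val - min a.val b.val ≤ q - ℓ) := by
  constructor
  · intro h
    have hadj : (webGraph q ℓ).Adj a b := by
      by_contra hn
      exact h ⟨hab, hn⟩
    rw [webGraph, SimpleGraph.fromRel_adj] at hadj
    rcases hadj.2 with h1 | h1
    · exact h1
    · rwa [max_comm b.val a.val, min_comm b.val a.val] at h1
  · intro h hc
    exact hc.2 (by rw [webGraph, SimpleGraph.fromRel_adj]; exact ⟨hab, Or.inl h⟩)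

theorem stmt13 (q ℓ : ℕ) (h2 : 2 ≤ ℓ) (hq : 2 * ℓ ≤ q) :
    IsGreatest {k | ∃ s : Finset (Fin q),
      (∀ a ∈ s, ∀ b ∈ s, a ≠ b → ¬ (webGraph q ℓ)ᶜ.Adj a b) ∧ s.card = k} (q / ℓ) := by
  have hℓ : 0 < ℓ := by omega
  have hq0 : 0 < q := by omega
  have hkq : (q / ℓ) * ℓ ≤ q := Nat.div_mul_le_self q ℓ
  constructor
  · -- membership: the set {0, ℓ, 2ℓ, …}
    set f : ℕ → Fin q := fun i => ⟨(i * ℓ) % q, Nat.mod_lt _ hq0⟩ with hf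
    have hbound : ∀ i < q / ℓ, i * ℓ + ℓ ≤ q := by
      intro i hi
      have : (i + 1) * ℓ ≤ (q / ℓ) * ℓ := Nat.mul_le_mul_right _ hi
      have h1 : (i + 1) * ℓ = i * ℓ + ℓ := by ring
      omega
    have hfval : ∀ i < q / ℓ, (f i).val = i * ℓ := by
      intro i hi
      have := hbound i hi
      simp [hf, Nat.mod_eq_of_lt (show i * ℓ < q by omega)]
    refine ⟨(Finset.range (q / ℓ)).image f, ?_, ?_⟩
    · intro a ha b hb hab
      rcases Finset.mem_image.mp ha with ⟨i, hi, rfl⟩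
      rcases Finset.mem_image.mp hb with ⟨j, hj, rfl⟩
      rw [Finset.mem_range] at hi hj
      rw [nonadj_iff q ℓ _ _ hab]
      rw [hfval i hi, hfval j hj]
      have hij : i ≠ j := by
        intro h; exact hab (by rw [h])
      have hbi := hbound i hi
      have hbj := hbound j hj
      rcases Nat.lt_or_ge i j with h | h
      · have : i * ℓ + ℓ ≤ j * ℓ := by
          have : (i + 1) * ℓ ≤ j * ℓ := Nat.mul_le_mul_right _ h
          have h1 : (i + 1) * ℓ = i * ℓ + ℓ := by ring
          omega
        omega
      · have hji : j < i := by omega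
        have : j * ℓ + ℓ ≤ i * ℓ := by
          have : (j + 1) * ℓ ≤ i * ℓ := Nat.mul_le_mul_right _ hji
          have h1 : (j + 1) * ℓ = j * ℓ + ℓ := by ring
          omega
        omega
    · rw [Finset.card_image_of_injOn, Finset.card_range]
      intro i hi j hj hfeq
      rw [Finset.mem_coe, Finset.mem_range] at hi hj
      have : i * ℓ = j * ℓ := by
        have h1 := hfval i hi
        have h2 := hfval j hj
        rw [← h1, ← h2, hfeq]
      exact Nat.eq_of_mul_eq_mul_right hℓ this
  · -- upper bound
    rintro k ⟨s, hs, rfl⟩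
    rcases s.eq_empty_or_nonempty with rfl | hne
    · simp
    · set x0 := s.min' hne with hx0
      have hx0s : x0 ∈ s := s.min'_mem hne
      have hx0le : ∀ x ∈ s, x0.val ≤ x.val := fun x hx => s.min'_le x hx
      have hd : ∀ x ∈ s, x ≠ x0 → ℓ ≤ x.val - x0.val ∧ x.val - x0.val ≤ q - ℓ := by
        intro x hx hxne
        have := (nonadj_iff q ℓ x0 x (by exact fun h => hxne h.symm)).mp
          (hs x0 hx0s x hx (fun h => hxne h.symm))
        have hle := hx0le x hx
        rw [max_eq_right hle, min_eq_left hle] at this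
        exact this
      have : s.card ≤ (Finset.range (q / ℓ)).card := by
        apply Finset.card_le_card_of_injOn (fun x => (x.val - x0.val) / ℓ)
        · intro x hx
          rw [Finset.mem_coe, Finset.mem_range]
          rcases eq_or_ne x x0 with rfl | hxne
          · simp only [Nat.sub_self, Nat.zero_div]
            exact Nat.div_pos (by omega) hℓ
          · obtain ⟨h1, h2⟩ := hd x hx hxne
            have hg : ((x.val - x0.val) / ℓ) * ℓ ≤ x.val - x0.val :=
              Nat.div_mul_le_self _ _
            have hstep : ((x.val - x0.val) / ℓ + 1) * ℓ ≤ q := by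
              have h1 : ((x.val - x0.val) / ℓ + 1) * ℓ = ((x.val - x0.val) / ℓ) * ℓ + ℓ := by
                ring
              omega
            have := (Nat.le_div_iff_mul_le hℓ).mpr hstep
            dsimp only
            omega
        · intro x hx y hy heq
          dsimp only at heq
          by_contra hxy
          have hadj := (nonadj_iff q ℓ x y hxy).mp (hs x hx y hy hxy)
          have hxx0 := hx0le x hx
          have hyx0 := hx0le y hy
          rcases Nat.lt_trichotomy x.val y.val with h | h | h
          · have h1 : ℓ ≤ y.val - x.val := by
              rw [max_eq_right (le_of_lt h), min_eq_left (le_of_lt h)] at hadj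
              exact hadj.1
            have hb : (x.val - x0.val) + ℓ ≤ y.val - x0.val := by omega
            have hdiv : ((x.val - x0.val) + ℓ) / ℓ ≤ (y.val - x0.val) / ℓ :=
              Nat.div_le_div_right hb
            rw [Nat.add_div_right _ hℓ] at hdiv
            omega
          · exact hxy (Fin.ext h)
          · have h1 : ℓ ≤ x.val - y.val := by
              rw [max_eq_left (le_of_lt h), min_eq_right (le_of_lt h)] at hadj
              exact hadj.1
            have hb : (y.val - x0.val) + ℓ ≤ x.val - x0.val := by omega
            have hdiv : ((y.val - x0.val) + ℓ) / ℓ ≤ (x.val - x0.val) / ℓ :=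
              Nat.div_le_div_right hb
            rw [Nat.add_div_right _ hℓ] at hdiv
            omega
      simpa using this
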